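/- Let q be a prime power with 10 dividing q − 1, and let d, c ∈ F_q^* and e ∈ F_q^*. Then the number N of pairs (b, y) ∈ F_q × F_q with d b^2 + c y^{10} = e and y ≠ 0 satisfies N ≥ q − 8√q − 3. In particular, if q ≥ 72 then there exists a pair (b, y) ∈ F_q × F_q with y ≠ 0 and d b^2 + c y^{10} = e. -/

import Mathlib

open Finset Polynomial

section Aux

variable {F : Type*} [Field F] [Fintype F] [DecidableEq F]

lemma aux_mulEquiv_eq (χ : MulChar F ℂ) :
    MulChar.mulEquivToUnitHom χ = MulChar.equivToUnitHom χ := rfl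

/-- order of the value of a character at a generator equals the order of the character. -/
lemma aux_orderOf_val {g : Fˣ} (hg : ∀ x : Fˣ, x ∈ Subgroup.zpowers g)
    (χ₀ : MulChar F ℂ) : orderOf (MulChar.equivToUnitHom χ₀ g) = orderOf χ₀ := by
  symm
  rw [orderOf_eq_orderOf_iff]
  intro n
  constructor
  · intro h
    have : MulChar.mulEquivToUnitHom (χ₀ ^ n) g = 1 := by
      rw [h]; rw [map_one]; rfl
    rwa [map_pow, aux_mulEquiv_eq] at this
  · intro h
    rw [MulChar.eq_iff hg (χ₀ ^ n) 1]
    have h1 : ((MulChar.equivToUnitHom χ₀ g : ℂˣ) : ℂ) ^ n = 1 := by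
      rw [← Units.val_pow_eq_pow_val, h, Units.val_one]
    rw [MulChar.coe_equivToUnitHom] at h1
    rw [MulChar.one_apply_coe]
    rcases Nat.eq_zero_or_pos n with rfl | hn
    · simp
    · rw [MulChar.pow_apply' _ hn.ne', h1]

end Aux

section Fiber

variable {F : Type*} [Field F] [Fintype F] [DecidableEq F]

lemma aux_fiber_count (q : ℕ) (hq : Fintype.card F = q) (hdvd : 10 ∣ q - 1)
    {g : Fˣ} (hg : ∀ x : Fˣ, x ∈ Subgroup.zpowers g)
    {χ₀ : MulChar F ℂ} (hχ₀ : orderOf χ₀ = 10)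
    {a : F} (ha : a ≠ 0) :
    ((univ.filter fun y : F => y ^ 10 = a).card : ℂ) = ∑ k ∈ range 10, (χ₀ ^ k) a := by
  have hq2 : 2 ≤ q := hq ▸ Fintype.one_lt_card
  have hq1 : 10 ≤ q - 1 := Nat.le_of_dvd (by omega) hdvd
  have hcardu : orderOf g = q - 1 := by
    rw [orderOf_eq_card_of_forall_mem_zpowers hg, Nat.card_eq_fintype_card,
      Fintype.card_units, hq]
  set u : ℂˣ := MulChar.equivToUnitHom χ₀ g with hu_def
  have hu : orderOf u = 10 := by rw [aux_orderOf_val hg, hχ₀]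
  -- write a as a power of g
  have hau : IsUnit a := isUnit_iff_ne_zero.mpr ha
  obtain ⟨m, hm⟩ := (Submonoid.mem_powers_iff _ _).mp
    (mem_powers_iff_mem_zpowers.mpr (hg hau.unit))
  have ham : a = ((g ^ m : Fˣ) : F) := by rw [hm, IsUnit.unit_spec]
  set z : ℂ := χ₀ a with hz_def
  have hzu : z = ((u ^ m : ℂˣ) : ℂ) := by
    rw [hz_def, ham, ← MulChar.coe_equivToUnitHom, map_pow]
  have hz10 : z ^ 10 = 1 := by
    rw [hz_def, ← MulChar.pow_apply' _ (by norm_num), ← hχ₀, pow_orderOf_eq_one,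
      show a = (hau.unit : F) from (IsUnit.unit_spec _).symm, MulChar.one_apply_coe]
  have hterm : ∀ k ∈ range 10, (χ₀ ^ k) a = z ^ k := by
    intro k _
    rcases Nat.eq_zero_or_pos k with rfl | hk
    · rw [pow_zero, pow_zero, show a = (hau.unit : F) from (IsUnit.unit_spec _).symm,
        MulChar.one_apply_coe]
    · rw [MulChar.pow_apply' _ hk.ne']
  rw [Finset.sum_congr rfl hterm]
  by_cases hz : z = 1
  · -- a is a tenth power; fiber has 10 elements
    rw [hz]
    simp only [one_pow, Finset.sum_const, card_range, nsmul_eq_mul, mul_one]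
    have hdm : 10 ∣ m := by
      rw [← hu]
      apply orderOf_dvd_of_pow_eq_one
      exact Units.ext (by rw [← hzu, hz, Units.val_one])
    obtain ⟨m', rfl⟩ := hdm
    set w : Fˣ := g ^ m' with hw_def
    have hw10 : ((w : F)) ^ 10 = a := by
      rw [ham, ← Units.val_pow_eq_pow_val, ← pow_mul, mul_comm]
    have hwne : (w : F) ≠ 0 := w.ne_zero
    obtain ⟨s, hs⟩ := hdvd
    have hs0 : 0 < s := by omega
    have hords : orderOf (g ^ s) = 10 := by
      rw [orderOf_pow, hcardu, hs]
      have hgcd : Nat.gcd (10 * s) s = s := Nat.gcd_eq_right (dvd_mul_left s 10)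
      rw [hgcd, Nat.mul_div_cancel _ hs0]
    have hprim : IsPrimitiveRoot ((g ^ s : Fˣ) : F) 10 := by
      have h10 : orderOf ((g ^ s : Fˣ) : F) = 10 := by rw [orderOf_units, hords]
      exact h10 ▸ IsPrimitiveRoot.orderOf _
    have hcard : (univ.filter fun y : F => y ^ 10 = a).card = 10 := by
      have hbij : (univ.filter fun y : F => y ^ 10 = a).card = (nthRootsFinset 10 (1 : F)).card := by
        apply Finset.card_nbij' (fun y => y * (w : F)⁻¹) (fun t => t * (w : F))
        · intro y hy
          rw [Finset.mem_coe, Finset.mem_filter] at hy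
          rw [Finset.mem_coe, Polynomial.mem_nthRootsFinset (by norm_num : 0 < 10)]
          rw [mul_pow, hy.2, inv_pow, ← hw10]
          field_simp
        · intro t ht
          rw [Finset.mem_coe, Polynomial.mem_nthRootsFinset (by norm_num : 0 < 10)] at ht
          rw [Finset.mem_coe, Finset.mem_filter]
          exact ⟨Finset.mem_univ _, by rw [mul_pow, ht, one_mul, hw10]⟩
        · intro y _; field_simp
        · intro t _; field_simp
      rw [hbij, hprim.card_nthRootsFinset]
    rw [hcard]
  · -- χ₀ a ≠ 1 : fiber is empty
    rw [geom_sum_eq hz, hz10, sub_self, zero_div]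
    norm_cast
    rw [Finset.card_eq_zero, Finset.filter_eq_empty_iff]
    intro y _
    intro hy10
    apply hz
    have hy0 : y ≠ 0 := by
      intro h; apply ha; rw [← hy10, h]; simp
    have hzy : z = (χ₀ y) ^ 10 := by rw [hz_def, ← hy10, map_pow]
    rw [hzy, ← MulChar.pow_apply' _ (by norm_num : (10:ℕ) ≠ 0), ← hχ₀, pow_orderOf_eq_one,
      show y = ((isUnit_iff_ne_zero.mpr hy0).unit : F) from (IsUnit.unit_spec _).symm,
      MulChar.one_apply_coe]

end Fiber

section Quad

variable {F : Type*} [Field F] [Fintype F] [DecidableEq F]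

/-- any character value has absolute value at most 1. -/
lemma aux_abs_le_one (ψ : MulChar F ℂ) (x : F) : ‖ψ x‖ ≤ 1 := by
  rcases eq_or_ne x 0 with rfl | hx
  · rw [ψ.map_zero]; simp
  · have hxu : IsUnit x := isUnit_iff_ne_zero.mpr hx
    have h1 : (ψ x) ^ (Fintype.card Fˣ) = 1 := by
      rw [← MulChar.pow_apply' _ (Fintype.card_pos.ne'), MulChar.pow_card_eq_one,
        show x = (hxu.unit : F) from (IsUnit.unit_spec _).symm, MulChar.one_apply_coe]
    have := Complex.norm_eq_one_of_pow_eq_one h1 Fintype.card_pos.ne'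
    rw [this]

/-- the fifth power of a character of order 10 is the (complexified) quadratic character. -/
lemma aux_chi5 (hF2 : ringChar F ≠ 2) (hq3 : 3 ≤ Fintype.card F)
    {g : Fˣ} (hg : ∀ x : Fˣ, x ∈ Subgroup.zpowers g)
    {χ₀ : MulChar F ℂ} (hχ₀ : orderOf χ₀ = 10) :
    χ₀ ^ 5 = (quadraticChar F).ringHomComp (Int.castRingHom ℂ) := by
  rw [MulChar.eq_iff hg]
  set u : ℂˣ := MulChar.equivToUnitHom χ₀ g with hu_def
  have hu : orderOf u = 10 := by rw [aux_orderOf_val hg, hχ₀]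
  have hgo : orderOf g = Fintype.card F - 1 := by
    rw [orderOf_eq_card_of_forall_mem_zpowers hg, Nat.card_eq_fintype_card,
      Fintype.card_units]
  have hq2 : 2 ≤ Fintype.card F := Fintype.one_lt_card
  have hL : (χ₀ ^ 5) (g : F) = ((u ^ 5 : ℂˣ) : ℂ) := by
    rw [MulChar.pow_apply' _ (by norm_num), ← MulChar.coe_equivToUnitHom, ← hu_def,
      Units.val_pow_eq_pow_val]
  have h10 : u ^ 10 = 1 := hu ▸ pow_orderOf_eq_one u
  have hv2 : ((u ^ 5 : ℂˣ) : ℂ) ^ 2 = 1 := by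
    have h10' : (u ^ 5) ^ 2 = 1 := by rw [← pow_mul]; exact h10
    rw [← Units.val_pow_eq_pow_val, h10', Units.val_one]
  have hv1 : ((u ^ 5 : ℂˣ) : ℂ) ≠ 1 := by
    intro h
    have h5 : u ^ 5 = 1 := Units.ext (by rw [h, Units.val_one])
    have := orderOf_dvd_of_pow_eq_one h5
    rw [hu] at this
    norm_num at this
  have hvm1 : ((u ^ 5 : ℂˣ) : ℂ) = -1 := by
    set v : ℂ := ((u ^ 5 : ℂˣ) : ℂ)
    have hfac : (v - 1) * (v + 1) = 0 := by linear_combination hv2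
    rcases mul_eq_zero.mp hfac with h | h
    · exact absurd (sub_eq_zero.mp h) hv1
    · exact eq_neg_of_add_eq_zero_left h
  -- RHS : quadratic character of a generator is -1
  have hgne : (g : F) ≠ 0 := g.ne_zero
  have hRq : quadraticChar F (g : F) = -1 := by
    rw [quadraticChar_eq_pow_of_char_ne_two hF2 hgne]
    have hne1 : (g : F) ^ (Fintype.card F / 2) ≠ 1 := by
      intro h1
      have hdvd2 : orderOf ((g : F)) ∣ Fintype.card F / 2 := orderOf_dvd_of_pow_eq_one h1
      rw [orderOf_units, hgo] at hdvd2
      have hpos : 0 < Fintype.card F / 2 := Nat.div_pos hq2 (by norm_num)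
      have := Nat.le_of_dvd hpos hdvd2
      omega
    rw [if_neg hne1]
  rw [hL, hvm1, MulChar.ringHomComp_apply, hRq]
  norm_num

end Quad

section Jac

variable {F : Type*} [Field F] [Fintype F] [DecidableEq F]

lemma aux_jacobi_abs {ψ χ : MulChar F ℂ} (hψ : ψ ≠ 1) (hχ : χ ≠ 1) (hψχ : ψ * χ ≠ 1) :
    ‖jacobiSum ψ χ‖ = Real.sqrt (Fintype.card F) := by
  have hchar : ringChar ℂ ≠ ringChar F := by
    have h0 : ringChar ℂ = 0 := ringChar.eq_zero
    have hp : (ringChar F).Prime := CharP.char_is_prime F (ringChar F)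
    rw [h0]
    exact fun h => hp.ne_zero h.symm
  have hmul := jacobiSum_mul_jacobiSum_inv hchar hψ hχ hψχ
  have hstar : jacobiSum ψ⁻¹ χ⁻¹ = star (jacobiSum ψ χ) := by
    unfold jacobiSum
    rw [star_sum]
    apply Finset.sum_congr rfl
    intro x _
    rw [star_mul', MulChar.star_apply', MulChar.star_apply']
  rw [hstar] at hmul
  have hnsq : Complex.normSq (jacobiSum ψ χ) = (Fintype.card F : ℝ) := by
    have h' : ((Complex.normSq (jacobiSum ψ χ) : ℝ) : ℂ) = ((Fintype.card F : ℕ) : ℂ) := by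
      rw [← Complex.mul_conj]
      exact hmul
    exact_mod_cast h'
  rw [Complex.norm_def, hnsq]

/-- the substitution computation for each character sum `T_k`. -/
lemma aux_Tk (ψ χ : MulChar F ℂ) {c e : F} (hc : c ≠ 0) (he : e ≠ 0) :
    ∑ a ∈ univ.filter fun a : F => a ≠ 0, ψ a * χ (e - c * a)
      = ψ (e * c⁻¹) * (χ e * jacobiSum ψ χ) := by
  have h1 : ∑ a ∈ univ.filter fun a : F => a ≠ 0, ψ a * χ (e - c * a)
      = ∑ a : F, ψ a * χ (e - c * a) := by
    rw [Finset.sum_filter]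
    apply Finset.sum_congr rfl
    intro a _
    split_ifs with h
    · rfl
    · push_neg at h
      rw [h, ψ.map_zero, zero_mul]
  rw [h1]
  have hec : e * c⁻¹ ≠ 0 := mul_ne_zero he (inv_ne_zero hc)
  have h2 : ∑ a : F, ψ a * χ (e - c * a)
      = ∑ x : F, ψ (e * c⁻¹ * x) * χ (e - c * (e * c⁻¹ * x)) := by
    exact (Fintype.sum_equiv (Equiv.mulLeft₀ (e * c⁻¹) hec) _ _ (fun x => rfl)).symm
  rw [h2]
  have h3 : ∀ x : F, ψ (e * c⁻¹ * x) * χ (e - c * (e * c⁻¹ * x))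
      = ψ (e * c⁻¹) * (χ e * (ψ x * χ (1 - x))) := by
    intro x
    have h4 : e - c * (e * c⁻¹ * x) = e * (1 - x) := by field_simp
    rw [h4]
    simp only [map_mul]
    ring
  simp_rw [h3]
  rw [← Finset.mul_sum, ← Finset.mul_sum]
  rfl

end Jac

section Key

variable {F : Type*} [Field F] [Fintype F] [DecidableEq F]

lemma aux_key (q : ℕ) (hq : Fintype.card F = q) (hdvd : 10 ∣ q - 1)
    (d c e : F) (hd : d ≠ 0) (hc : c ≠ 0) (he : e ≠ 0) :
    |(Nat.card {p : F × F // d * p.1 ^ 2 + c * p.2 ^ 10 = e ∧ p.2 ≠ 0} : ℝ) - ((q : ℝ) - 1)|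
      ≤ 8 * Real.sqrt q + 2 := by
  have hq2 : 2 ≤ q := hq ▸ Fintype.one_lt_card
  have hq1 : 10 ≤ q - 1 := Nat.le_of_dvd (by omega) hdvd
  -- odd characteristic
  have hF2 : ringChar F ≠ 2 := by
    intro h2
    obtain ⟨n, hp, hcard⟩ := FiniteField.card F (ringChar F)
    rw [h2] at hcard
    have h2q : 2 ∣ q := by
      rw [← hq, hcard]
      exact dvd_pow_self 2 n.ne_zero
    have h2q1 : 2 ∣ q - 1 := dvd_trans (by norm_num) hdvd
    omega
  -- characters
  set χ : MulChar F ℂ := (quadraticChar F).ringHomComp (Int.castRingHom ℂ) with hχ_def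
  have hχ1 : χ ≠ 1 :=
    (MulChar.ringHomComp_ne_one_iff Int.cast_injective).mpr
      (quadraticChar_ne_one hF2)
  have hsq : χ * χ = 1 := by
    have := ((quadraticChar_isQuadratic F).comp (Int.castRingHom ℂ)).sq_eq_one
    rwa [pow_two] at this
  have hχinv : χ⁻¹ = χ := inv_eq_of_mul_eq_one_right hsq
  obtain ⟨g, hg⟩ := IsCyclic.exists_generator (α := Fˣ)
  obtain ⟨χ₀, hχ₀⟩ := MulChar.exists_mulChar_orderOf F (by rw [hq]; exact hdvd)
    (Complex.isPrimitiveRoot_exp 10 (by norm_num))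
  have hχ5 : χ₀ ^ 5 = χ := aux_chi5 hF2 (by omega) hg hχ₀
  -- the set of nonzero elements
  set U : Finset F := univ.filter (fun y : F => y ≠ 0) with hU_def
  have hUcard : U.card = q - 1 := by
    rw [hU_def, Finset.filter_ne', Finset.card_erase_of_mem (mem_univ 0),
      Finset.card_univ, hq]
  have hUmem : ∀ y : F, y ∈ U ↔ y ≠ 0 := by
    intro y; rw [hU_def, Finset.mem_filter]; simp
  -- counting: reduce to a sum over nonzero y
  have hN0 : Nat.card {p : F × F // d * p.1 ^ 2 + c * p.2 ^ 10 = e ∧ p.2 ≠ 0}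
      = ∑ y ∈ U, (univ.filter fun b : F => b ^ 2 = d⁻¹ * (e - c * y ^ 10)).card := by
    rw [Nat.card_eq_fintype_card, Fintype.card_subtype, Finset.card_filter,
      Fintype.sum_prod_type_right, Finset.sum_filter]
    apply Finset.sum_congr rfl
    intro y _
    by_cases hy : y = 0
    · simp [hy]
    · rw [if_pos hy, Finset.card_filter]
      apply Finset.sum_congr rfl
      intro b _
      have hiff : (d * b ^ 2 + c * y ^ 10 = e ∧ y ≠ 0) ↔ b ^ 2 = d⁻¹ * (e - c * y ^ 10) := by
        constructor
        · rintro ⟨h, -⟩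
          field_simp
          linear_combination h
        · intro h
          refine ⟨?_, hy⟩
          field_simp at h
          linear_combination h
      simp only [hiff]
  -- quadratic character counts square roots
  have hb : ∀ t : F, ((univ.filter fun b : F => b ^ 2 = t).card : ℂ) = 1 + χ t := by
    intro t
    have h := quadraticChar_card_sqrts hF2 t
    rw [Set.toFinset_setOf] at h
    have h' : ((univ.filter fun b : F => b ^ 2 = t).card : ℂ)
        = ((quadraticChar F t : ℤ) : ℂ) + 1 := by exact_mod_cast congrArg (fun z : ℤ => (z : ℂ)) h
    rw [h', hχ_def, MulChar.ringHomComp_apply, eq_intCast]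
    ring
  set S : ℂ := ∑ y ∈ U, χ (e - c * y ^ 10) with hS_def
  set N : ℕ := Nat.card {p : F × F // d * p.1 ^ 2 + c * p.2 ^ 10 = e ∧ p.2 ≠ 0} with hN_def
  have hNC : (N : ℂ) = ((q : ℂ) - 1) + χ d⁻¹ * S := by
    rw [hN0]
    push_cast
    rw [show (∑ y ∈ U, ((univ.filter fun b : F => b ^ 2 = d⁻¹ * (e - c * y ^ 10)).card : ℂ))
        = ∑ y ∈ U, (1 + χ (d⁻¹ * (e - c * y ^ 10))) from Finset.sum_congr rfl fun y _ => hb _]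
    rw [Finset.sum_add_distrib, Finset.sum_const, hUcard]
    have hcast : ((q - 1 : ℕ) : ℂ) = (q : ℂ) - 1 := by
      rw [Nat.cast_sub (by omega), Nat.cast_one]
    rw [nsmul_eq_mul, mul_one, hcast, hS_def]
    congr 1
    rw [Finset.mul_sum]
    apply Finset.sum_congr rfl
    intro y _
    rw [map_mul]
  -- rewrite S via the order-10 character
  have hS : S = ∑ k ∈ range 10, (χ₀ ^ k) (e * c⁻¹) * (χ e * jacobiSum (χ₀ ^ k) χ) := by
    have hmem : ∀ y ∈ U, y ^ 10 ∈ U := by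
      intro y hy
      rw [hUmem] at hy ⊢
      exact pow_ne_zero _ hy
    have s1 : S = ∑ y ∈ U, ∑ a ∈ U, ite (a = y ^ 10) (χ (e - c * a)) 0 := by
      rw [hS_def]
      apply Finset.sum_congr rfl
      intro y hy
      rw [Finset.sum_ite_eq' U (y ^ 10) (fun a => χ (e - c * a)), if_pos (hmem y hy)]
    have s2 : S = ∑ a ∈ U, ((univ.filter fun y : F => y ^ 10 = a).card : ℂ) * χ (e - c * a) := by
      rw [s1, Finset.sum_comm]
      apply Finset.sum_congr rfl
      intro a ha
      rw [← Finset.sum_filter, Finset.sum_const, nsmul_eq_mul]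
      congr 2
      apply Finset.card_bij (fun y _ => y)
      · intro y hy
        rw [Finset.mem_filter] at hy ⊢
        exact ⟨mem_univ _, hy.2.symm⟩
      · intro y₁ h₁ y₂ h₂ h; exact h
      · intro y hy
        rw [Finset.mem_filter] at hy
        refine ⟨y, ?_, rfl⟩
        rw [Finset.mem_filter]
        refine ⟨?_, hy.2.symm⟩
        rw [hUmem]
        intro h0
        rw [hUmem] at ha
        exact ha (by rw [← hy.2, h0]; norm_num)
    have s3 : S = ∑ a ∈ U, (∑ k ∈ range 10, (χ₀ ^ k) a) * χ (e - c * a) := by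
      rw [s2]
      apply Finset.sum_congr rfl
      intro a ha
      rw [aux_fiber_count q hq hdvd hg hχ₀ ((hUmem a).mp ha)]
    rw [s3]
    have s4 : ∑ a ∈ U, (∑ k ∈ range 10, (χ₀ ^ k) a) * χ (e - c * a)
        = ∑ k ∈ range 10, ∑ a ∈ U, (χ₀ ^ k) a * χ (e - c * a) := by
      rw [Finset.sum_comm]
      apply Finset.sum_congr rfl
      intro a _
      rw [Finset.sum_mul]
    rw [s4]
    apply Finset.sum_congr rfl
    intro k _
    rw [hU_def]
    exact aux_Tk (χ₀ ^ k) χ hc he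
  -- bound each term
  have hJb : ∀ k ∈ range 10,
      ‖(χ₀ ^ k) (e * c⁻¹) * (χ e * jacobiSum (χ₀ ^ k) χ)‖
        ≤ (if k = 0 ∨ k = 5 then 1 else Real.sqrt q) := by
    intro k hk
    rw [Finset.mem_range] at hk
    have hterm : ‖(χ₀ ^ k) (e * c⁻¹) * (χ e * jacobiSum (χ₀ ^ k) χ)‖
        ≤ ‖jacobiSum (χ₀ ^ k) χ‖ := by
      rw [norm_mul, norm_mul]
      have h1 := aux_abs_le_one (χ₀ ^ k) (e * c⁻¹)
      have h2 := aux_abs_le_one χ e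
      have h3 : (0:ℝ) ≤ ‖jacobiSum (χ₀ ^ k) χ‖ := norm_nonneg _
      have h4 : (0:ℝ) ≤ ‖(χ₀ ^ k) (e * c⁻¹)‖ := norm_nonneg _
      have h5 : (0:ℝ) ≤ ‖χ e‖ := norm_nonneg _
      have hab : ‖(χ₀ ^ k) (e * c⁻¹)‖ * ‖χ e‖ ≤ 1 :=
        mul_le_one₀ h1 h5 h2
      rw [← mul_assoc]
      exact mul_le_of_le_one_left h3 hab
    by_cases hk0 : k = 0
    · subst hk0
      rw [if_pos (Or.inl rfl)]
      refine hterm.trans ?_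
      rw [pow_zero, jacobiSum_one_nontrivial hχ1]
      simp
    by_cases hk5 : k = 5
    · subst hk5
      rw [if_pos (Or.inr rfl)]
      refine hterm.trans ?_
      rw [hχ5, show (jacobiSum χ χ : ℂ) = jacobiSum χ χ⁻¹ from by rw [hχinv],
        jacobiSum_nontrivial_inv hχ1, norm_neg]
      exact aux_abs_le_one χ (-1)
    · rw [if_neg (by tauto)]
      refine hterm.trans ?_
      have hψ1 : χ₀ ^ k ≠ 1 := by
        intro h
        have := orderOf_dvd_of_pow_eq_one h
        rw [hχ₀] at this
        have := Nat.le_of_dvd (Nat.pos_of_ne_zero hk0) this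
        omega
      have hψχ : χ₀ ^ k * χ ≠ 1 := by
        intro h
        have h1 : χ₀ ^ k = χ⁻¹ := eq_inv_of_mul_eq_one_left h
        rw [hχinv, ← hχ5] at h1
        have h2 : k = 5 := by
          apply pow_injOn_Iio_orderOf (by rw [hχ₀]; exact Set.mem_Iio.mpr hk)
            (by rw [hχ₀]; exact Set.mem_Iio.mpr (by norm_num)) h1
        exact hk5 h2
      rw [aux_jacobi_abs hψ1 hχ1 hψχ, hq]
  -- sum up
  have hsum : ∑ k ∈ range 10, (if k = 0 ∨ k = 5 then (1:ℝ) else Real.sqrt q)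
      = 8 * Real.sqrt q + 2 := by
    rw [Finset.sum_range_succ, Finset.sum_range_succ, Finset.sum_range_succ,
      Finset.sum_range_succ, Finset.sum_range_succ, Finset.sum_range_succ,
      Finset.sum_range_succ, Finset.sum_range_succ, Finset.sum_range_succ,
      Finset.sum_range_succ, Finset.sum_range_zero]
    norm_num
    ring
  have hSabs : ‖S‖ ≤ 8 * Real.sqrt q + 2 := by
    rw [hS]
    refine le_trans (norm_sum_le _ _) ?_
    rw [← hsum]
    exact Finset.sum_le_sum hJb
  -- conclude
  have habsC : ‖(N : ℂ) - ((q : ℂ) - 1)‖ ≤ 8 * Real.sqrt q + 2 := by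
    rw [hNC, add_sub_cancel_left, norm_mul]
    have h1 := aux_abs_le_one χ d⁻¹
    have h2 : (0:ℝ) ≤ ‖S‖ := norm_nonneg _
    calc ‖χ d⁻¹‖ * ‖S‖ ≤ 1 * ‖S‖ :=
          mul_le_mul_of_nonneg_right h1 h2
      _ = ‖S‖ := one_mul _
      _ ≤ 8 * Real.sqrt q + 2 := hSabs
  calc |(N : ℝ) - ((q : ℝ) - 1)|
      = ‖((((N : ℝ) - ((q : ℝ) - 1)) : ℝ) : ℂ)‖ := by rw [Complex.norm_real, Real.norm_eq_abs]
    _ = ‖(N : ℂ) - ((q : ℂ) - 1)‖ := by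
      rw [Complex.ofReal_sub, Complex.ofReal_sub, Complex.ofReal_natCast, Complex.ofReal_natCast,
        Complex.ofReal_one]
    _ ≤ 8 * Real.sqrt q + 2 := habsC

end Key

/-- Let `q` be a prime power with `10 ∣ q - 1`, and let `d, c, e ∈ F_q*`. Then the number `N` of
pairs `(b, y) ∈ F_q × F_q` with `d b² + c y¹⁰ = e` and `y ≠ 0` satisfies `N ≥ q - 8√q - 3`.
In particular, if `q ≥ 72` then such a pair exists. -/
theorem stmt14 {F : Type*} [Field F] [Fintype F] (q : ℕ) (hq : Fintype.card F = q)
    (hqpp : ∃ (r n : ℕ), r.Prime ∧ 0 < n ∧ q = r ^ n) (hdvd : 10 ∣ q - 1)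
    (d c e : F) (hd : d ≠ 0) (hc : c ≠ 0) (he : e ≠ 0) :
    (q : ℝ) - 8 * Real.sqrt q - 3 ≤
      (Nat.card {by_ : F × F // d * by_.1 ^ 2 + c * by_.2 ^ 10 = e ∧ by_.2 ≠ 0} : ℝ) ∧
    (72 ≤ q → ∃ b y : F, y ≠ 0 ∧ d * b ^ 2 + c * y ^ 10 = e) := by
  haveI : DecidableEq F := Classical.decEq F
  have hkey := aux_key q hq hdvd d c e hd hc he
  set N : ℕ := Nat.card {by_ : F × F // d * by_.1 ^ 2 + c * by_.2 ^ 10 = e ∧ by_.2 ≠ 0} with hN_def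
  have hbound : (q : ℝ) - 8 * Real.sqrt q - 3 ≤ (N : ℝ) := by
    have h := (abs_le.mp hkey).1
    linarith
  refine ⟨hbound, fun h72 => ?_⟩
  have hq72 : (72 : ℝ) ≤ (q : ℝ) := by exact_mod_cast h72
  have hsq : Real.sqrt q < ((q : ℝ) - 3) / 8 := by
    rw [Real.sqrt_lt' (by linarith)]
    have hkey2 : (0:ℝ) ≤ ((q:ℝ) - 72) * ((q:ℝ) - 70) := by
      apply mul_nonneg <;> linarith
    nlinarith
  have hNpos : (0 : ℝ) < (N : ℝ) := by
    have : (0:ℝ) < (q : ℝ) - 8 * Real.sqrt q - 3 := by linarith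
    linarith
  have hNne : N ≠ 0 := by
    intro h0
    rw [h0] at hNpos
    norm_num at hNpos
  obtain ⟨⟨⟨⟨b, y⟩, hby⟩⟩, -⟩ := Nat.card_ne_zero.mp hNne
  exact ⟨b, y, hby.2, hby.1⟩
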